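/- Let p be a prime and let P ⊆ 𝔽_p² be a finite set of points with |P| ≥ 2. Let L(P) be the set of lines determined by pairs of distinct points of P. Then the number of ordered triples (q₁, q₂, q₃) of pairwise distinct collinear points of P is at least (|P|·(|P|−1))^(3/2) / (2√2 · |L(P)|^(1/2)) − |P|·(|P|−1). -/

import Mathlib

def IsAffLine {p : ℕ} (s : Set (ZMod p × ZMod p)) : Prop :=
  ∃ a b c : ZMod p, (a, b) ≠ (0, 0) ∧ s = {v : ZMod p × ZMod p | a * v.1 + b * v.2 = c}

def linesOf {p : ℕ} (P : Set (ZMod p × ZMod p)) : Set (Set (ZMod p × ZMod p)) :=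
  {s | IsAffLine s ∧ ∃ q₁ ∈ P, ∃ q₂ ∈ P, q₁ ≠ q₂ ∧ q₁ ∈ s ∧ q₂ ∈ s}

namespace StmtAux

def lineThrough {p : ℕ} (q r : ZMod p × ZMod p) : Set (ZMod p × ZMod p) :=
  {v | (v.1 - q.1) * (r.2 - q.2) = (v.2 - q.2) * (r.1 - q.1)}

lemma mem_lineThrough_left {p : ℕ} (q r : ZMod p × ZMod p) : q ∈ lineThrough q r := by
  simp [lineThrough]

lemma mem_lineThrough_right {p : ℕ} (q r : ZMod p × ZMod p) : r ∈ lineThrough q r := by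
  simp only [lineThrough, Set.mem_setOf_eq]; ring

lemma isAffLine_lineThrough {p : ℕ} {q r : ZMod p × ZMod p} (h : q ≠ r) :
    IsAffLine (lineThrough q r) := by
  refine ⟨r.2 - q.2, q.1 - r.1, (r.2 - q.2) * q.1 + (q.1 - r.1) * q.2, ?_, ?_⟩
  · intro hc
    rw [Prod.mk.injEq] at hc
    exact h (Prod.ext (sub_eq_zero.mp hc.2) ((sub_eq_zero.mp hc.1).symm ▸ rfl))
  · ext v
    simp only [lineThrough, Set.mem_setOf_eq]
    constructor <;> intro h' <;> linear_combination h'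

lemma eq_lineThrough {p : ℕ} [Fact p.Prime] {s : Set (ZMod p × ZMod p)}
    (hs : IsAffLine s) {q r : ZMod p × ZMod p}
    (hq : q ∈ s) (hr : r ∈ s) (hqr : q ≠ r) : s = lineThrough q r := by
  obtain ⟨a, b, c, hab, rfl⟩ := hs
  simp only [Set.mem_setOf_eq] at hq hr
  have hd : a * (r.1 - q.1) + b * (r.2 - q.2) = 0 := by linear_combination hr - hq
  have hne : r.1 - q.1 ≠ 0 ∨ r.2 - q.2 ≠ 0 := by
    by_contra hcon
    push_neg at hcon
    exact hqr ((Prod.ext (sub_eq_zero.mp hcon.1) (sub_eq_zero.mp hcon.2)).symm)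
  have habne : a ≠ 0 ∨ b ≠ 0 := by
    by_contra hcon
    push_neg at hcon
    exact hab (by simp [hcon.1, hcon.2])
  ext v
  simp only [Set.mem_setOf_eq, lineThrough]
  constructor
  · intro hv
    have hx : (v.1 - q.1) * (r.2 - q.2) - (v.2 - q.2) * (r.1 - q.1) = 0 := by
      rcases habne with h | h
      · have h1 : a * ((v.1 - q.1) * (r.2 - q.2) - (v.2 - q.2) * (r.1 - q.1)) = 0 := by
          linear_combination (r.2 - q.2) * hv - (r.2 - q.2) * hq - (v.2 - q.2) * hd
        exact (mul_eq_zero.mp h1).resolve_left h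
      · have h2 : b * ((v.1 - q.1) * (r.2 - q.2) - (v.2 - q.2) * (r.1 - q.1)) = 0 := by
          linear_combination (v.1 - q.1) * hd - (r.1 - q.1) * hv + (r.1 - q.1) * hq
        exact (mul_eq_zero.mp h2).resolve_left h
    linear_combination hx
  · intro hv
    rcases hne with h | h
    · have h0 : (a * v.1 + b * v.2 - c) * (r.1 - q.1) = 0 := by
        linear_combination (v.1 - q.1) * hd - b * hv + (r.1 - q.1) * hq
      have := (mul_eq_zero.mp h0).resolve_right h
      linear_combination this
    · have h0 : (a * v.1 + b * v.2 - c) * (r.2 - q.2) = 0 := by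
        linear_combination (v.2 - q.2) * hd + a * hv + (r.2 - q.2) * hq
      have := (mul_eq_zero.mp h0).resolve_right h
      linear_combination this

end StmtAux

open Finset in
lemma card_triples {α : Type*} [DecidableEq α] (s : Finset α) :
    ((s ×ˢ s ×ˢ s).filter fun t : α × α × α =>
        t.1 ≠ t.2.1 ∧ t.1 ≠ t.2.2 ∧ t.2.1 ≠ t.2.2).card
      = s.card * ((s.card - 1) * (s.card - 1) - (s.card - 1)) := by
  have h : ((s ×ˢ s ×ˢ s).filter fun t : α × α × α =>
        t.1 ≠ t.2.1 ∧ t.1 ≠ t.2.2 ∧ t.2.1 ≠ t.2.2).card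
      = (s.sigma fun a => (s.erase a).offDiag).card := by
    apply Finset.card_nbij' (fun t => ⟨t.1, t.2⟩) (fun x => (x.1, x.2))
    · intro t ht
      simp only [Finset.mem_coe, Finset.mem_filter, Finset.mem_product] at ht
      simp only [Finset.mem_coe, Finset.mem_sigma, Finset.mem_offDiag, Finset.mem_erase]
      exact ⟨ht.1.1, ⟨ht.2.1.symm, ht.1.2.1⟩, ⟨ht.2.2.1.symm, ht.1.2.2⟩, ht.2.2.2⟩
    · intro x hx
      simp only [Finset.mem_coe, Finset.mem_sigma, Finset.mem_offDiag, Finset.mem_erase] at hx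
      simp only [Finset.mem_coe, Finset.mem_filter, Finset.mem_product]
      exact ⟨⟨hx.1, hx.2.1.2, hx.2.2.1.2⟩, hx.2.1.1.symm, hx.2.2.1.1.symm, hx.2.2.2⟩
    · intro a _; rfl
    · intro a _; rfl
  rw [h, Finset.card_sigma]
  have : ∀ a ∈ s, ((s.erase a).offDiag).card = (s.card - 1) * (s.card - 1) - (s.card - 1) := by
    intro a ha
    rw [Finset.offDiag_card, Finset.card_erase_of_mem ha]
  rw [Finset.sum_congr rfl this, Finset.sum_const, smul_eq_mul]

lemma offDiag_card_real {α : Type*} [DecidableEq α] (s : Finset α) :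
    ((s.offDiag.card : ℝ)) = (s.card : ℝ) * ((s.card : ℝ) - 1) := by
  rw [Finset.offDiag_card]
  rcases Nat.eq_zero_or_pos s.card with h | h
  · simp [h]
  · obtain ⟨k, hk⟩ := Nat.exists_eq_add_of_le h
    rw [hk]
    have : (1 + k) * (1 + k) - (1 + k) = k * (1 + k) := by
      rw [Nat.add_mul, Nat.one_mul, Nat.add_sub_cancel_left]
    rw [this]
    push_cast
    ring

lemma trip_card_real (m : ℕ) :
    ((m * ((m - 1) * (m - 1) - (m - 1)) : ℕ) : ℝ)
      = (m : ℝ) * ((m : ℝ) - 1) * ((m : ℝ) - 2) := by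
  match m with
  | 0 => simp
  | 1 => norm_num
  | (n+2) =>
    have h1 : n + 2 - 1 = n + 1 := rfl
    rw [h1]
    have : (n + 1) * (n + 1) - (n + 1) = (n + 1) * n := by
      rw [Nat.mul_comm, Nat.succ_mul, Nat.add_sub_cancel, Nat.mul_comm]
    rw [this]
    push_cast
    ring


lemma sum_key {ι : Type*} (S : Finset ι) (m : ι → ℝ) (hm : ∀ i ∈ S, 2 ≤ m i) :
    (∑ i ∈ S, m i * (m i - 1)) ^ 4
      ≤ 2 * S.card * (∑ i ∈ S, m i * (m i - 1)) * (∑ i ∈ S, m i * (m i - 1) ^ 2) ^ 2 := by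
  set n := ∑ i ∈ S, m i * (m i - 1) with hn
  set A := ∑ i ∈ S, m i * (m i - 1) ^ 2 with hA
  set M := ∑ i ∈ S, m i with hM
  have hm0 : ∀ i ∈ S, (0:ℝ) ≤ m i := fun i hi => le_trans (by norm_num) (hm i hi)
  have hn0 : ∀ i ∈ S, (0:ℝ) ≤ m i * (m i - 1) := fun i hi =>
    mul_nonneg (hm0 i hi) (by linarith [hm i hi])
  have hA0 : ∀ i ∈ S, (0:ℝ) ≤ m i * (m i - 1) ^ 2 := fun i hi =>
    mul_nonneg (hm0 i hi) (sq_nonneg _)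
  have hnn : (0:ℝ) ≤ n := Finset.sum_nonneg hn0
  have hAn : (0:ℝ) ≤ A := Finset.sum_nonneg hA0
  have hMn : (0:ℝ) ≤ M := Finset.sum_nonneg hm0
  -- Cauchy-Schwarz 1 : n^2 ≤ A * M
  have cs1 : n ^ 2 ≤ A * M := by
    have := Finset.sum_mul_sq_le_sq_mul_sq S
      (fun i => Real.sqrt (m i * (m i - 1) ^ 2)) (fun i => Real.sqrt (m i))
    have e1 : ∑ i ∈ S, Real.sqrt (m i * (m i - 1) ^ 2) * Real.sqrt (m i) = n := by
      apply Finset.sum_congr rfl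
      intro i hi
      rw [← Real.sqrt_mul (hA0 i hi)]
      have : m i * (m i - 1) ^ 2 * m i = (m i * (m i - 1)) ^ 2 := by ring
      rw [this, Real.sqrt_sq (hn0 i hi)]
    have e2 : ∑ i ∈ S, Real.sqrt (m i * (m i - 1) ^ 2) ^ 2 = A := by
      apply Finset.sum_congr rfl
      intro i hi
      rw [Real.sq_sqrt (hA0 i hi)]
    have e3 : ∑ i ∈ S, Real.sqrt (m i) ^ 2 = M := by
      apply Finset.sum_congr rfl
      intro i hi
      rw [Real.sq_sqrt (hm0 i hi)]
    rwa [e1, e2, e3] at this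
  -- Cauchy-Schwarz 2 : M^2 ≤ card * ∑ m^2 ≤ card * (2 * n)
  have cs2 : M ^ 2 ≤ (S.card : ℝ) * (2 * n) := by
    have h1 := Finset.sum_mul_sq_le_sq_mul_sq S (fun _ => (1:ℝ)) m
    simp only [one_mul, one_pow] at h1
    have h2 : (∑ _i ∈ S, (1:ℝ)) = (S.card : ℝ) := by simp
    have h3 : ∑ i ∈ S, m i ^ 2 ≤ 2 * n := by
      rw [hn, Finset.mul_sum]
      apply Finset.sum_le_sum
      intro i hi
      nlinarith [hm i hi]
    calc M ^ 2 ≤ (S.card : ℝ) * ∑ i ∈ S, m i ^ 2 := by rw [← h2]; exact h1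
      _ ≤ (S.card : ℝ) * (2 * n) := by
          apply mul_le_mul_of_nonneg_left h3 (by positivity)
  calc n ^ 4 = (n ^ 2) ^ 2 := by ring
    _ ≤ (A * M) ^ 2 := pow_le_pow_left₀ (sq_nonneg n) cs1 2
    _ = M ^ 2 * A ^ 2 := by ring
    _ ≤ ((S.card : ℝ) * (2 * n)) * A ^ 2 :=
        mul_le_mul_of_nonneg_right cs2 (sq_nonneg A)
    _ = 2 * S.card * n * A ^ 2 := by ring


open StmtAux in
theorem stmt_11 (p : ℕ) (hp : p.Prime) (P : Finset (ZMod p × ZMod p)) (hP : 2 ≤ P.card) :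
    ((P.card : ℝ) * ((P.card : ℝ) - 1)) ^ ((3 : ℝ) / 2) /
        (2 * Real.sqrt 2 * (((linesOf (↑P : Set (ZMod p × ZMod p))).ncard : ℝ)) ^ ((1 : ℝ) / 2))
      - (P.card : ℝ) * ((P.card : ℝ) - 1)
    ≤ (({t : (ZMod p × ZMod p) × (ZMod p × ZMod p) × (ZMod p × ZMod p) |
          t.1 ∈ P ∧ t.2.1 ∈ P ∧ t.2.2 ∈ P ∧
          t.1 ≠ t.2.1 ∧ t.1 ≠ t.2.2 ∧ t.2.1 ≠ t.2.2 ∧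
          ∃ s, IsAffLine s ∧ t.1 ∈ s ∧ t.2.1 ∈ s ∧ t.2.2 ∈ s}.ncard : ℝ)) := by
  classical
  haveI : Fact p.Prime := ⟨hp⟩
  -- the finset of lines
  set L : Finset (Set (ZMod p × ZMod p)) :=
    (Set.toFinite (linesOf (↑P : Set (ZMod p × ZMod p)))).toFinset with hLdef
  have hLcard : (linesOf (↑P : Set (ZMod p × ZMod p))).ncard = L.card :=
    Set.ncard_eq_toFinset_card _ _
  have hmemL : ∀ ℓ, ℓ ∈ L ↔ ℓ ∈ linesOf (↑P : Set (ZMod p × ZMod p)) := fun ℓ =>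
    Set.Finite.mem_toFinset _
  have hlineL : ∀ q₁ q₂ : ZMod p × ZMod p, q₁ ∈ P → q₂ ∈ P → q₁ ≠ q₂ →
      lineThrough q₁ q₂ ∈ L := by
    intro q₁ q₂ h₁ h₂ hne
    rw [hmemL]
    exact ⟨isAffLine_lineThrough hne, q₁, Finset.mem_coe.mpr h₁, q₂, Finset.mem_coe.mpr h₂,
      hne, mem_lineThrough_left q₁ q₂, mem_lineThrough_right q₁ q₂⟩
  -- the finset of collinear triples
  set Tfin : Finset ((ZMod p × ZMod p) × (ZMod p × ZMod p) × (ZMod p × ZMod p)) :=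
    (P ×ˢ P ×ˢ P).filter (fun t => t.1 ≠ t.2.1 ∧ t.1 ≠ t.2.2 ∧ t.2.1 ≠ t.2.2 ∧
      ∃ s, IsAffLine s ∧ t.1 ∈ s ∧ t.2.1 ∈ s ∧ t.2.2 ∈ s) with hTdef
  have hTcard : ({t : (ZMod p × ZMod p) × (ZMod p × ZMod p) × (ZMod p × ZMod p) |
          t.1 ∈ P ∧ t.2.1 ∈ P ∧ t.2.2 ∈ P ∧
          t.1 ≠ t.2.1 ∧ t.1 ≠ t.2.2 ∧ t.2.1 ≠ t.2.2 ∧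
          ∃ s, IsAffLine s ∧ t.1 ∈ s ∧ t.2.1 ∈ s ∧ t.2.2 ∈ s}).ncard = Tfin.card := by
    rw [show {t : (ZMod p × ZMod p) × (ZMod p × ZMod p) × (ZMod p × ZMod p) |
          t.1 ∈ P ∧ t.2.1 ∈ P ∧ t.2.2 ∈ P ∧
          t.1 ≠ t.2.1 ∧ t.1 ≠ t.2.2 ∧ t.2.1 ≠ t.2.2 ∧
          ∃ s, IsAffLine s ∧ t.1 ∈ s ∧ t.2.1 ∈ s ∧ t.2.2 ∈ s} = (↑Tfin : Set _) by
      ext t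
      simp only [hTdef, Set.mem_setOf_eq, Finset.coe_filter, Finset.mem_product]
      tauto]
    exact Set.ncard_coe_finset _
  -- points of P on a line
  set Pl : Set (ZMod p × ZMod p) → Finset (ZMod p × ZMod p) :=
    fun ℓ => P.filter (· ∈ ℓ) with hPldef
  have hPl : ∀ ℓ x, x ∈ Pl ℓ ↔ x ∈ P ∧ x ∈ ℓ := by
    intro ℓ x; simp [hPldef]
  -- every line of L has at least 2 points of P
  have hm2 : ∀ ℓ ∈ L, 2 ≤ (Pl ℓ).card := by
    intro ℓ hℓ
    obtain ⟨-, q₁, h₁, q₂, h₂, hne, hq₁, hq₂⟩ := (hmemL ℓ).mp hℓ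
    exact Finset.one_lt_card.mpr ⟨q₁, (hPl ℓ q₁).mpr ⟨Finset.mem_coe.mp h₁, hq₁⟩,
      q₂, (hPl ℓ q₂).mpr ⟨Finset.mem_coe.mp h₂, hq₂⟩, hne⟩
  -- counting pairs line by line
  have hNsum : P.offDiag.card = ∑ ℓ ∈ L, (Pl ℓ).offDiag.card := by
    rw [Finset.card_eq_sum_card_fiberwise
      (f := fun q : (ZMod p × ZMod p) × (ZMod p × ZMod p) => lineThrough q.1 q.2)
      (t := L) (fun q hq => by
        rw [Finset.mem_coe, Finset.mem_offDiag] at hq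
        exact hlineL q.1 q.2 hq.1 hq.2.1 hq.2.2)]
    apply Finset.sum_congr rfl
    intro ℓ hℓ
    congr 1
    ext q
    rw [Finset.mem_filter, Finset.mem_offDiag, Finset.mem_offDiag, hPl, hPl]
    constructor
    · rintro ⟨⟨h₁, h₂, hne⟩, heq⟩
      exact ⟨⟨h₁, heq ▸ mem_lineThrough_left q.1 q.2⟩,
        ⟨h₂, heq ▸ mem_lineThrough_right q.1 q.2⟩, hne⟩
    · rintro ⟨⟨h₁, hℓ₁⟩, ⟨h₂, hℓ₂⟩, hne⟩
      exact ⟨⟨h₁, h₂, hne⟩, (eq_lineThrough ((hmemL ℓ).mp hℓ).1 hℓ₁ hℓ₂ hne).symm⟩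
  -- counting triples line by line
  have hTsum : Tfin.card = ∑ ℓ ∈ L,
      ((Pl ℓ ×ˢ Pl ℓ ×ˢ Pl ℓ).filter fun t =>
        t.1 ≠ t.2.1 ∧ t.1 ≠ t.2.2 ∧ t.2.1 ≠ t.2.2).card := by
    rw [Finset.card_eq_sum_card_fiberwise
      (f := fun t : (ZMod p × ZMod p) × (ZMod p × ZMod p) × (ZMod p × ZMod p) =>
        lineThrough t.1 t.2.1)
      (t := L) (fun t ht => by
        simp only [Finset.mem_coe, hTdef, Finset.mem_filter, Finset.mem_product] at ht
        exact hlineL t.1 t.2.1 ht.1.1 ht.1.2.1 ht.2.1)]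
    apply Finset.sum_congr rfl
    intro ℓ hℓ
    congr 1
    ext t
    rw [Finset.mem_filter, hTdef, Finset.mem_filter, Finset.mem_product, Finset.mem_product,
      Finset.mem_filter, Finset.mem_product, Finset.mem_product, hPl, hPl, hPl]
    constructor
    · rintro ⟨⟨⟨h₁, h₂, h₃⟩, hne₁, hne₂, hne₃, s, hs, hs₁, hs₂, hs₃⟩, heq⟩
      have hseq : s = lineThrough t.1 t.2.1 := eq_lineThrough hs hs₁ hs₂ hne₁
      refine ⟨⟨⟨h₁, heq ▸ mem_lineThrough_left t.1 t.2.1⟩,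
        ⟨h₂, heq ▸ mem_lineThrough_right t.1 t.2.1⟩,
        ⟨h₃, ?_⟩⟩, hne₁, hne₂, hne₃⟩
      rw [← heq, ← hseq]
      exact hs₃
    · rintro ⟨⟨⟨h₁, hℓ₁⟩, ⟨h₂, hℓ₂⟩, ⟨h₃, hℓ₃⟩⟩, hne₁, hne₂, hne₃⟩
      have haff := ((hmemL ℓ).mp hℓ).1
      exact ⟨⟨⟨h₁, h₂, h₃⟩, hne₁, hne₂, hne₃, ℓ, haff, hℓ₁, hℓ₂, hℓ₃⟩,
        (eq_lineThrough haff hℓ₁ hℓ₂ hne₁).symm⟩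
  -- real quantities
  set m : Set (ZMod p × ZMod p) → ℝ := fun ℓ => ((Pl ℓ).card : ℝ) with hmdef
  set N : ℝ := (P.card : ℝ) * ((P.card : ℝ) - 1) with hNdef
  set T : ℝ := (Tfin.card : ℝ) with hTr
  have hmR : ∀ ℓ ∈ L, (2 : ℝ) ≤ m ℓ := fun ℓ hℓ => by
    show (2 : ℝ) ≤ ((Pl ℓ).card : ℝ)
    exact_mod_cast hm2 ℓ hℓ
  have hNreal : ∑ ℓ ∈ L, m ℓ * (m ℓ - 1) = N := by
    have : ∑ ℓ ∈ L, m ℓ * (m ℓ - 1) = ∑ ℓ ∈ L, (((Pl ℓ).offDiag.card : ℕ) : ℝ) :=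
      Finset.sum_congr rfl fun ℓ _ => (offDiag_card_real (Pl ℓ)).symm
    rw [this, ← Nat.cast_sum, ← hNsum, offDiag_card_real, hNdef]
  have hTreal : T = ∑ ℓ ∈ L, m ℓ * (m ℓ - 1) * (m ℓ - 2) := by
    rw [hTr, hTsum, Nat.cast_sum]
    apply Finset.sum_congr rfl
    intro ℓ _
    rw [card_triples, trip_card_real]
  have hAreal : ∑ ℓ ∈ L, m ℓ * (m ℓ - 1) ^ 2 = T + N := by
    have : ∀ ℓ ∈ L, m ℓ * (m ℓ - 1) ^ 2
        = m ℓ * (m ℓ - 1) * (m ℓ - 2) + m ℓ * (m ℓ - 1) := fun ℓ _ => by ring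
    rw [Finset.sum_congr rfl this, Finset.sum_add_distrib, ← hNreal, ← hTreal]
  -- the key inequality
  have key := sum_key L m hmR
  rw [hNreal, hAreal] at key
  set Lr : ℝ := (L.card : ℝ) with hLr
  have hN2 : (2 : ℝ) ≤ N := by
    have h2 : (2 : ℝ) ≤ (P.card : ℝ) := by exact_mod_cast hP
    nlinarith
  have hT0 : (0 : ℝ) ≤ T := by rw [hTr]; positivity
  have hL1 : (1 : ℝ) ≤ Lr := by
    have : L.Nonempty := by
      obtain ⟨q₁, h₁, q₂, h₂, hne⟩ := Finset.one_lt_card.mp hP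
      exact ⟨lineThrough q₁ q₂, hlineL q₁ q₂ h₁ h₂ hne⟩
    rw [hLr]
    exact_mod_cast Finset.card_pos.mpr this
  have key3 : N ^ 3 ≤ 2 * Lr * (T + N) ^ 2 := by
    have hNpos : (0 : ℝ) < N := by linarith
    have : N ^ 3 * N ≤ (2 * Lr * (T + N) ^ 2) * N := by nlinarith [key]
    exact le_of_mul_le_mul_right this hNpos
  -- wrap up with square roots
  rw [hTcard, hLcard, ← hTr, ← hLr]
  have hN0 : (0 : ℝ) ≤ N := by linarith
  have hLr0 : (0 : ℝ) ≤ Lr := by linarith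
  have hrw1 : N ^ ((3 : ℝ) / 2) = Real.sqrt (N ^ 3) := by
    rw [show ((3 : ℝ) / 2) = ((3 : ℕ) : ℝ) * (1 / 2) by norm_num, Real.rpow_mul hN0,
      Real.rpow_natCast N 3, ← Real.sqrt_eq_rpow]
  have hrw2 : Lr ^ ((1 : ℝ) / 2) = Real.sqrt Lr := (Real.sqrt_eq_rpow Lr).symm
  rw [hrw1, hrw2]
  have hsqL : (0 : ℝ) < Real.sqrt Lr := Real.sqrt_pos.mpr (by linarith)
  have hsq2 : (0 : ℝ) < Real.sqrt 2 := Real.sqrt_pos.mpr (by norm_num)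
  have hsq : Real.sqrt (N ^ 3) ≤ Real.sqrt 2 * Real.sqrt Lr * (T + N) := by
    calc Real.sqrt (N ^ 3) ≤ Real.sqrt (2 * Lr * (T + N) ^ 2) := Real.sqrt_le_sqrt key3
      _ = Real.sqrt 2 * Real.sqrt Lr * (T + N) := by
          rw [Real.sqrt_mul (by positivity), Real.sqrt_mul (by norm_num),
            Real.sqrt_sq (by linarith)]
  have hd : (0 : ℝ) < 2 * Real.sqrt 2 * Real.sqrt Lr := by positivity
  have hdiv : Real.sqrt (N ^ 3) / (2 * Real.sqrt 2 * Real.sqrt Lr) ≤ (T + N) / 2 := by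
    rw [div_le_iff₀ hd]
    have : (T + N) / 2 * (2 * Real.sqrt 2 * Real.sqrt Lr)
        = Real.sqrt 2 * Real.sqrt Lr * (T + N) := by ring
    rw [this]
    exact hsq
  linarith
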